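/- Let k ≥ 2, m ≥ 1, ξ = exp(2πi/2^k), and let R be a symmetric m×m integer matrix. Let a, b, c, d ∈ ℤ_{≥0}^m with mod-2 reductions a_0, b_0, c_0, d_0 ∈ {0,1}^m, and let e, f ∈ ℤ_{≥0}^m with mod-2 reductions e_0, f_0 satisfying a_0 · d_0 + b_0 · c_0 ≡ a_0 · f_0 + e_0 · c_0 (mod 2). Then [τ_R^{(k)} E(c,d) (τ_R^{(k)})^†] · [τ_R^{(k)} E(a,b) (τ_R^{(k)})^†] = E(a_0,e) [τ_R^{(k)} E(c,d) (τ_R^{(k)})^†] E(a_0,e) · E(c_0,f) [τ_R^{(k)} E(a,b) (τ_R^{(k)})^†] E(c_0,f). In particular this holds for e = b_0 + a_0 R and f = d_0 + c_0 R. -/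
import Mathlib


open Complex Matrix

namespace CliffordHierarchy

noncomputable section

variable {ι : Type*} [Fintype ι] [DecidableEq ι]

/-- Embed a binary vector (entries in `ZMod 2`) into ℤ as a 0/1 vector. -/
def toZ (v : ι → ZMod 2) : ι → ℤ := fun i => ((v i).val : ℤ)

/-- Reduce an integer vector mod 2, viewed in `ZMod 2`. -/
def red2 (a : ι → ℤ) : ι → ZMod 2 := fun i => ((a i : ZMod 2))

/-- Dot product of integer row vectors, over ℤ. -/
def dotZ (x y : ι → ℤ) : ℤ := ∑ i, x i * y i

/-- Bilinear form `x R yᵀ` over ℤ. -/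
def bil (R : Matrix ι ι ℤ) (x y : ι → ℤ) : ℤ := ∑ i, ∑ j, x i * R i j * y j

/-- η(v; R, w) = [(v + w) − (v ∗ w)] R (v ∗ w)ᵀ, with ∗ the entrywise product. -/
def eta (R : Matrix ι ι ℤ) (v w : ι → ℤ) : ℤ := bil R (v + w - v * w) (v * w)

/-- bitwise XOR of 0/1 integer vectors, re-embedded as a 0/1 integer vector. -/
def vxor (v w : ι → ℤ) : ι → ℤ := fun i => v i + w i - 2 * (v i * w i)

/-- ξ_k = exp(2πi/2^k). -/
def xi (k : ℕ) : ℂ := Complex.exp (2 * Real.pi * Complex.I / 2 ^ k)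

/-- τ_R^{(k)} = diag(ξ^{v R vᵀ mod 2^k}), indexed by v ∈ {0,1}^m. -/
def tau (k : ℕ) (R : Matrix ι ι ℤ) : Matrix (ι → ZMod 2) (ι → ZMod 2) ℂ :=
  Matrix.diagonal fun v => xi k ^ (bil R (toZ v) (toZ v) % 2 ^ k)

/-- The Hermitian Pauli matrix E(a,b) extended to integer-vector arguments:
    E(a,b) e_v = i^{a·b mod 4} (−1)^{v·b} e_{v ⊕ a₀}. -/
def EMat (a b : ι → ℤ) : Matrix (ι → ZMod 2) (ι → ZMod 2) ℂ :=
  Matrix.of fun u v =>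
    if u = v + red2 a then Complex.I ^ (dotZ a b % 4) * (-1 : ℂ) ^ dotZ (toZ v) b else 0

/-- 0th binary digit vector of a (componentwise `mod 2`). -/
def dig0 (a : ι → ℤ) : ι → ℤ := fun i => a i % 2

/-- 1st binary digit vector of a. -/
def dig1 (a : ι → ℤ) : ι → ℤ := fun i => (a i / 2) % 2

/-- q^{(k−1)}(v; R, a, b). -/
def qfun (k : ℕ) (R : Matrix ι ι ℤ) (a b v : ι → ℤ) : ℤ :=
  (1 - 2 ^ (k - 2)) * bil R (dig0 a) (dig0 a)
    + 2 ^ (k - 1) * (dotZ (dig0 a) (dig1 b) + dotZ (dig0 b) (dig1 a))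
    + (2 + 2 ^ (k - 1)) * bil R v (dig0 a) - 4 * eta R v (dig0 a)


/-- The conjugation identity of Lemma (properties)(c), for given e, f. -/
def conjEq (k : ℕ) (R : Matrix ι ι ℤ) (a b c d e f : ι → ℤ) : Prop :=
  (tau k R * EMat c d * (tau k R)ᴴ) * (tau k R * EMat a b * (tau k R)ᴴ)
    = EMat (dig0 a) e * (tau k R * EMat c d * (tau k R)ᴴ) * EMat (dig0 a) e
        * (EMat (dig0 c) f * (tau k R * EMat a b * (tau k R)ᴴ) * EMat (dig0 c) f)

set_option linter.unusedSectionVars false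

lemma xi_ne_zero (k : ℕ) : xi k ≠ 0 := Complex.exp_ne_zero _

lemma xi_pow_nat (k : ℕ) : xi k ^ (2 ^ k : ℕ) = 1 := by
  rw [xi, ← Complex.exp_nat_mul]
  rw [show ((2 ^ k : ℕ) : ℂ) * (2 * Real.pi * Complex.I / 2 ^ k) = 2 * Real.pi * Complex.I by
    push_cast; field_simp]
  exact Complex.exp_two_pi_mul_I

lemma xi_zpow_emod (k : ℕ) (n : ℤ) : xi k ^ (n % 2 ^ k) = xi k ^ n := by
  conv_rhs => rw [← Int.emod_add_mul_ediv n (2 ^ k)]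
  rw [zpow_add₀ (xi_ne_zero k), _root_.zpow_mul]
  rw [show ((2:ℤ)^k) = ((2^k : ℕ) : ℤ) by push_cast; ring, zpow_natCast, xi_pow_nat,
    _root_.one_zpow, mul_one]

lemma star_xi (k : ℕ) : starRingEnd ℂ (xi k) = (xi k)⁻¹ := by
  rw [xi, ← Complex.exp_conj, ← Complex.exp_neg]
  congr 1
  simp only [map_div₀, _root_.map_mul, map_pow, map_ofNat, Complex.conj_I, Complex.conj_ofReal]
  ring

lemma star_xi_zpow (k : ℕ) (n : ℤ) : starRingEnd ℂ (xi k ^ n) = xi k ^ (-n) := by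
  rw [map_zpow₀, star_xi, _root_.inv_zpow, ← _root_.zpow_neg]

/-- Matrix supported on the "shift by p" graph, with column-dependent value. -/
def shiftM (p : ι → ZMod 2) (φ : (ι → ZMod 2) → ℂ) : Matrix (ι → ZMod 2) (ι → ZMod 2) ℂ :=
  Matrix.of fun u v => if u = v + p then φ v else 0

lemma shiftM_mul (p q : ι → ZMod 2) (φ ψ : (ι → ZMod 2) → ℂ) :
    shiftM p φ * shiftM q ψ = shiftM (p + q) (fun v => φ (v + q) * ψ v) := by
  ext u v
  simp only [shiftM, Matrix.mul_apply, Matrix.of_apply]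
  rw [Finset.sum_eq_single (v + q)]
  · have h : v + q + p = v + (p + q) := by rw [add_assoc, add_comm q p]
    rw [h]
    by_cases huv : u = v + (p + q) <;> simp [huv]
  · intro w _ hw; simp [hw]
  · simp

lemma shiftM_congr {p q : ι → ZMod 2} {φ ψ : (ι → ZMod 2) → ℂ} (hpq : p = q)
    (h : ∀ v, φ v = ψ v) : shiftM p φ = shiftM q ψ := by
  subst hpq; ext u v; simp only [shiftM, Matrix.of_apply, h]

lemma tau_eq (k : ℕ) (R : Matrix ι ι ℤ) :
    tau k R = shiftM 0 (fun v => xi k ^ (bil R (toZ v) (toZ v))) := by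
  ext u v
  simp only [tau, shiftM, Matrix.diagonal_apply, Matrix.of_apply, add_zero]
  by_cases h : u = v
  · subst h; simp [xi_zpow_emod]
  · simp [h]

lemma tau_conjT (k : ℕ) (R : Matrix ι ι ℤ) :
    (tau k R)ᴴ = shiftM 0 (fun v => xi k ^ (-(bil R (toZ v) (toZ v)))) := by
  ext u v
  simp only [tau, shiftM, Matrix.conjTranspose_apply, Matrix.diagonal_apply, Matrix.of_apply,
    add_zero]
  by_cases h : u = v
  · subst h
    rw [if_pos rfl, if_pos rfl, ← starRingEnd_apply, star_xi_zpow, _root_.zpow_neg,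
      xi_zpow_emod, ← _root_.zpow_neg]
  · simp [h, Ne.symm h]

lemma EMat_eq (a b : ι → ℤ) :
    EMat a b = shiftM (red2 a) (fun v => Complex.I ^ (dotZ a b % 4) * (-1 : ℂ) ^ dotZ (toZ v) b) :=
  rfl

lemma dig0_eq_toZ_red2 (s : ι → ℤ) : dig0 s = toZ (red2 s) := by
  funext i
  simp only [dig0, toZ, red2, ZMod.val_intCast]
  norm_num

lemma red2_dig0 (s : ι → ℤ) : red2 (dig0 s) = red2 s := by
  funext i
  simp only [red2, dig0]
  rw [ZMod.intCast_eq_intCast_iff]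
  exact Int.emod_emod_of_dvd _ dvd_rfl

lemma dotZ_comm (x y : ι → ℤ) : dotZ x y = dotZ y x := by
  unfold dotZ; exact Finset.sum_congr rfl fun i _ => mul_comm _ _

lemma dotZ_add_right (x y z : ι → ℤ) : dotZ x (y + z) = dotZ x y + dotZ x z := by
  unfold dotZ
  rw [← Finset.sum_add_distrib]
  exact Finset.sum_congr rfl fun i _ => by simp [Pi.add_apply]; ring

lemma val_add_par (u w : ZMod 2) : (((u + w).val : ℤ)) % 2 = ((u.val : ℤ) + (w.val : ℤ)) % 2 := by
  revert u w; decide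

lemma dot_toZ_add (x w : ι → ZMod 2) (t : ι → ℤ) :
    dotZ (toZ (x + w)) t ≡ dotZ (toZ x) t + dotZ (toZ w) t [ZMOD 2] := by
  rw [Int.modEq_iff_dvd]
  have h : dotZ (toZ x) t + dotZ (toZ w) t - dotZ (toZ (x + w)) t
      = ∑ i, (toZ x i + toZ w i - toZ (x + w) i) * t i := by
    unfold dotZ
    rw [← Finset.sum_add_distrib, ← Finset.sum_sub_distrib]
    exact Finset.sum_congr rfl fun i _ => by ring
  rw [h]
  refine Finset.dvd_sum fun i _ => Dvd.dvd.mul_right ?_ _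
  have := val_add_par (x i) (w i)
  simp only [toZ, Pi.add_apply]
  omega

lemma dot_shift_par (x : ι → ZMod 2) (s t : ι → ℤ) :
    dotZ (toZ (x + red2 s)) t ≡ dotZ (toZ x) t + dotZ (dig0 s) t [ZMOD 2] := by
  rw [dig0_eq_toZ_red2]; exact dot_toZ_add x (red2 s) t

lemma dot_dig0_right (x t : ι → ℤ) : dotZ x (dig0 t) ≡ dotZ x t [ZMOD 2] := by
  rw [Int.modEq_iff_dvd]
  have h : dotZ x t - dotZ x (dig0 t) = ∑ i, x i * (t i - t i % 2) := by
    unfold dotZ dig0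
    rw [← Finset.sum_sub_distrib]
    exact Finset.sum_congr rfl fun i _ => by ring
  rw [h]
  exact Finset.dvd_sum fun i _ => Dvd.dvd.mul_left (by omega) _

lemma dot_dig0_left (x t : ι → ℤ) : dotZ (dig0 x) t ≡ dotZ x t [ZMOD 2] := by
  rw [dotZ_comm, dotZ_comm x t]; exact dot_dig0_right t x

lemma dotZ_vecMul_symm (R : Matrix ι ι ℤ) (hR : R.IsSymm) (x y : ι → ℤ) :
    dotZ x (Matrix.vecMul y R) = dotZ (Matrix.vecMul x R) y := by
  simp only [dotZ, Matrix.vecMul, dotProduct, Finset.mul_sum, Finset.sum_mul]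
  rw [Finset.sum_comm]
  refine Finset.sum_congr rfl fun i _ => Finset.sum_congr rfl fun j _ => ?_
  rw [← hR.apply i j]
  ring

lemma xi_merge (k : ℕ) (m n : ℤ) : xi k ^ m * xi k ^ n = xi k ^ (m + n) :=
  (zpow_add₀ (xi_ne_zero k) m n).symm

lemma xi_merge' (k : ℕ) (m n : ℤ) (c : ℂ) : xi k ^ m * (xi k ^ n * c) = xi k ^ (m + n) * c := by
  rw [← mul_assoc, xi_merge]

lemma I_merge (m n : ℤ) : Complex.I ^ m * Complex.I ^ n = Complex.I ^ (m + n) :=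
  (zpow_add₀ Complex.I_ne_zero m n).symm

lemma I_merge' (m n : ℤ) (c : ℂ) :
    Complex.I ^ m * (Complex.I ^ n * c) = Complex.I ^ (m + n) * c := by
  rw [← mul_assoc, I_merge]

lemma I_xi_comm (k : ℕ) (m n : ℤ) : Complex.I ^ m * xi k ^ n = xi k ^ n * Complex.I ^ m :=
  mul_comm _ _

lemma I_xi_comm' (k : ℕ) (m n : ℤ) (c : ℂ) :
    Complex.I ^ m * (xi k ^ n * c) = xi k ^ n * (Complex.I ^ m * c) := by
  rw [mul_left_comm]

lemma negone_eq (n : ℤ) : (-1 : ℂ) ^ n = Complex.I ^ (2 * n) := by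
  rw [_root_.zpow_mul]
  congr 1
  rw [show ((2:ℤ)) = ((2:ℕ):ℤ) from rfl, zpow_natCast, Complex.I_sq]

lemma I_zpow_congr {m n : ℤ} (h : m ≡ n [ZMOD 4]) : Complex.I ^ m = Complex.I ^ n := by
  obtain ⟨t, ht⟩ := (Int.modEq_iff_dvd.mp h)
  have hn : n = m + 4 * t := by omega
  rw [hn, zpow_add₀ Complex.I_ne_zero, _root_.zpow_mul,
    show ((4:ℤ)) = ((4:ℕ):ℤ) from rfl, zpow_natCast, Complex.I_pow_four, _root_.one_zpow, mul_one]

lemma key (k : ℕ) (R : Matrix ι ι ℤ) (a b c d e f : ι → ℤ)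
    (hpar : dotZ (dig0 a) (dig0 d) + dotZ (dig0 b) (dig0 c)
      ≡ dotZ (dig0 a) (dig0 f) + dotZ (dig0 e) (dig0 c) [ZMOD 2]) :
    conjEq k R a b c d e f := by
  unfold conjEq
  rw [tau_conjT, tau_eq, EMat_eq a b, EMat_eq c d, EMat_eq (dig0 a) e, EMat_eq (dig0 c) f,
    red2_dig0, red2_dig0]
  simp only [shiftM_mul]
  refine shiftM_congr ?_ ?_
  · funext i
    simp only [Pi.add_apply, Pi.zero_apply]
    generalize red2 a i = x
    generalize red2 c i = y
    revert x y; decide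
  · intro v
    simp only [add_zero, zero_add]
    have l1 : v + (red2 c + red2 a + red2 c) = v + red2 a := by
      funext i; simp only [Pi.add_apply]
      generalize v i = z; generalize red2 a i = x; generalize red2 c i = y
      revert x y z; decide
    have l2 : ∀ x : ι → ZMod 2, x + red2 a + red2 a = x := by
      intro x; funext i; simp only [Pi.add_apply]
      generalize x i = z; generalize red2 a i = y
      revert y z; decide
    have l3 : ∀ x : ι → ZMod 2, x + red2 c + red2 a = x + red2 a + red2 c := by
      intro x; funext i; simp only [Pi.add_apply]
      generalize x i = z; generalize red2 a i = y; generalize red2 c i = w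
      revert y z w; decide
    simp only [l1, l2, l3]
    simp only [negone_eq, mul_assoc, I_merge, I_merge', xi_merge, xi_merge', I_xi_comm,
      I_xi_comm']
    have hd1 := dot_shift_par v a d
    have hb1 := dot_shift_par v c b
    have he1 := dot_shift_par v c e
    have he2 := dot_shift_par v a e
    have hf1 := dot_shift_par (v + red2 a) c f
    have hf2 := dot_shift_par v a f
    have hPad := dot_dig0_right (dig0 a) d
    have hPcb := dot_dig0_right (dig0 c) b
    have hPaf := dot_dig0_right (dig0 a) f
    have hPce := dot_dig0_right (dig0 c) e
    have hcb : dotZ (dig0 c) (dig0 b) = dotZ (dig0 b) (dig0 c) := dotZ_comm _ _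
    have hce : dotZ (dig0 c) (dig0 e) = dotZ (dig0 e) (dig0 c) := dotZ_comm _ _
    congr 1
    · congr 1
      ring
    · refine I_zpow_congr ?_
      simp only [Int.ModEq] at *
      omega


theorem stmt15 {m k : ℕ} (hm : 1 ≤ m) (hk : 2 ≤ k)
    (R : Matrix (Fin m) (Fin m) ℤ) (hR : R.IsSymm)
    (a b c d : Fin m → ℤ)
    (ha : ∀ i, 0 ≤ a i) (hb : ∀ i, 0 ≤ b i) (hc : ∀ i, 0 ≤ c i) (hd : ∀ i, 0 ≤ d i) :
    (∀ e f : Fin m → ℤ, (∀ i, 0 ≤ e i) → (∀ i, 0 ≤ f i) →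
        dotZ (dig0 a) (dig0 d) + dotZ (dig0 b) (dig0 c)
          ≡ dotZ (dig0 a) (dig0 f) + dotZ (dig0 e) (dig0 c) [ZMOD 2] →
        conjEq k R a b c d e f)
    ∧ conjEq k R a b c d (dig0 b + Matrix.vecMul (dig0 a) R)
        (dig0 d + Matrix.vecMul (dig0 c) R) := by
  constructor
  · intro e f _ _ hpar
    exact key k R a b c d e f hpar
  · apply key
    have h1 := dot_dig0_right (dig0 a) (dig0 d + Matrix.vecMul (dig0 c) R)
    have h2 := dot_dig0_left (dig0 b + Matrix.vecMul (dig0 a) R) (dig0 c)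
    have h3 : dotZ (dig0 a) (dig0 d + Matrix.vecMul (dig0 c) R)
        = dotZ (dig0 a) (dig0 d) + dotZ (dig0 a) (Matrix.vecMul (dig0 c) R) :=
      dotZ_add_right _ _ _
    have h4 : dotZ (dig0 b + Matrix.vecMul (dig0 a) R) (dig0 c)
        = dotZ (dig0 b) (dig0 c) + dotZ (Matrix.vecMul (dig0 a) R) (dig0 c) := by
      rw [dotZ_comm, dotZ_add_right, dotZ_comm (dig0 c) (dig0 b), dotZ_comm (dig0 c)]
    have h5 := dotZ_vecMul_symm R hR (dig0 a) (dig0 c)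
    simp only [Int.ModEq] at *
    omega



end

end CliffordHierarchy
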